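/- arXiv:0802.0534 — 2 statements merged into one kernel-verified Lean document; each statement's English description precedes it below -/
import Mathlib

section
/- Let S, D ≥ 1 and let d : Fin D × Fin S → ℝ be nonnegative. Suppose that for every pair (u, v) ∈ Fin S × Fin D we have (∑_{q} d(q, u)) + (∑_{p} d(v, p)) − d(v, u) ≤ 1. Then ∑_{i,j} d(i, j) ≤ S·D/(S + D − 1). -/
theorem stmt_0 (S D : ℕ) (hS : 1 ≤ S) (hD : 1 ≤ D)
    (d : Fin D × Fin S → ℝ) (hd : ∀ p, 0 ≤ d p)
    (h : ∀ (u : Fin S) (v : Fin D),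
      (∑ q : Fin D, d (q, u)) + (∑ p : Fin S, d (v, p)) - d (v, u) ≤ 1) :
    ∑ i : Fin D, ∑ j : Fin S, d (i, j) ≤ (S : ℝ) * D / (S + D - 1) := by
  set T : ℝ := ∑ i : Fin D, ∑ j : Fin S, d (i, j) with hT
  have hpos : (0:ℝ) < (S:ℝ) + D - 1 := by
    have : (1:ℝ) ≤ S := by exact_mod_cast hS
    have : (1:ℝ) ≤ D := by exact_mod_cast hD
    linarith [show (1:ℝ) ≤ (S:ℝ) from by exact_mod_cast hS]
  rw [le_div_iff₀ hpos]
  have hsum : ∑ u : Fin S, ∑ v : Fin D,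
      ((∑ q : Fin D, d (q, u)) + (∑ p : Fin S, d (v, p)) - d (v, u)) ≤ (S:ℝ) * D := by
    calc ∑ u : Fin S, ∑ v : Fin D,
        ((∑ q : Fin D, d (q, u)) + (∑ p : Fin S, d (v, p)) - d (v, u))
        ≤ ∑ _u : Fin S, ∑ _v : Fin D, (1:ℝ) := by
          apply Finset.sum_le_sum; intro u _
          apply Finset.sum_le_sum; intro v _
          exact h u v
      _ = (S:ℝ) * D := by simp [mul_comm]
  have hswap : ∑ u : Fin S, ∑ q : Fin D, d (q, u) = T := by
    rw [hT, Finset.sum_comm]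
  have hexp : ∑ u : Fin S, ∑ v : Fin D,
      ((∑ q : Fin D, d (q, u)) + (∑ p : Fin S, d (v, p)) - d (v, u))
      = (D:ℝ) * T + (S:ℝ) * T - T := by
    simp only [Finset.sum_sub_distrib, Finset.sum_add_distrib, Finset.sum_const,
      Finset.card_univ, Fintype.card_fin, nsmul_eq_mul]
    rw [← Finset.mul_sum, hswap, ← hT]
  rw [hexp] at hsum
  linarith
end

section
/- Let K ≥ 2 and let d : Fin K × Fin K → ℝ be nonnegative with d(i,i) = 0 for all i. Suppose that for every ordered pair (p,q) with p ≠ q we have (∑_{j ≠ p} d(j, p)) + (∑_{i ≠ q} d(q, i)) − d(q, p) ≤ 1. Then ∑_{i ≠ j} d(i, j) ≤ K(K−1)/(2K−3). -/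
theorem stmt_3 (K : ℕ) (hK : 2 ≤ K)
    (d : Fin K × Fin K → ℝ) (hd : ∀ p, 0 ≤ d p) (hdiag : ∀ i, d (i, i) = 0)
    (h : ∀ p q : Fin K, p ≠ q →
      (∑ j ∈ Finset.univ.filter (· ≠ p), d (j, p)) +
      (∑ i ∈ Finset.univ.filter (· ≠ q), d (q, i)) - d (q, p) ≤ 1) :
    (∑ i : Fin K, ∑ j ∈ Finset.univ.filter (· ≠ i), d (i, j))
      ≤ (K : ℝ) * (K - 1) / (2 * K - 3) := by
  classical
  set S : ℝ := ∑ i : Fin K, ∑ j : Fin K, d (i, j) with hS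
  -- filtered sums equal full sums since diagonal vanishes
  have hcol : ∀ p : Fin K,
      ∑ j ∈ Finset.univ.filter (· ≠ p), d (j, p) = ∑ j, d (j, p) := by
    intro p
    apply Finset.sum_filter_of_ne
    intro x _ hx hxp
    exact hx (by rw [hxp, hdiag])
  have hrow : ∀ q : Fin K,
      ∑ i ∈ Finset.univ.filter (· ≠ q), d (q, i) = ∑ i, d (q, i) := by
    intro q
    apply Finset.sum_filter_of_ne
    intro x _ hx hxq
    exact hx (by rw [hxq, hdiag])
  have hgoalS : (∑ i : Fin K, ∑ j ∈ Finset.univ.filter (· ≠ i), d (i, j)) = S := by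
    simp only [hS]
    exact Finset.sum_congr rfl fun i _ => hrow i
  have hcolS : (∑ p : Fin K, ∑ j : Fin K, d (j, p)) = S := by
    rw [hS, Finset.sum_comm]
  have hfilt : ∀ p : Fin K, (Finset.univ.filter (· ≠ p) : Finset (Fin K)) =
      Finset.univ.erase p := by
    intro p; exact Finset.filter_ne' _ _
  have hcard : ∀ p : Fin K, ((Finset.univ.filter (· ≠ p) : Finset (Fin K)).card : ℝ)
      = (K : ℝ) - 1 := by
    intro p
    rw [hfilt p, Finset.card_erase_of_mem (Finset.mem_univ p)]
    have : (1 : ℕ) ≤ K := by omega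
    simp [Finset.card_univ, Nat.cast_sub this]
  -- sum the hypotheses
  have hsum : ∑ p : Fin K, ∑ q ∈ Finset.univ.filter (· ≠ p),
      ((∑ j, d (j, p)) + (∑ i, d (q, i)) - d (q, p)) ≤ (K : ℝ) * ((K : ℝ) - 1) := by
    have h1 : ∀ p : Fin K, ∑ q ∈ Finset.univ.filter (· ≠ p),
        ((∑ j, d (j, p)) + (∑ i, d (q, i)) - d (q, p))
        ≤ ∑ _q ∈ Finset.univ.filter (· ≠ p), (1 : ℝ) := by
      intro p
      apply Finset.sum_le_sum
      intro q hq
      have hqp : q ≠ p := (Finset.mem_filter.mp hq).2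
      have := h p q (Ne.symm hqp)
      rw [hcol p, hrow q] at this
      exact this
    calc ∑ p : Fin K, ∑ q ∈ Finset.univ.filter (· ≠ p),
          ((∑ j, d (j, p)) + (∑ i, d (q, i)) - d (q, p))
        ≤ ∑ p : Fin K, ∑ _q ∈ Finset.univ.filter (· ≠ p), (1 : ℝ) :=
          Finset.sum_le_sum fun p _ => h1 p
      _ = (K : ℝ) * ((K : ℝ) - 1) := by
          simp only [Finset.sum_const, nsmul_eq_mul, mul_one]
          rw [Finset.sum_congr rfl fun p _ => hcard p, Finset.sum_const,
            Finset.card_univ, Fintype.card_fin, nsmul_eq_mul]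
  -- compute LHS of hsum
  have hLHS : ∑ p : Fin K, ∑ q ∈ Finset.univ.filter (· ≠ p),
      ((∑ j, d (j, p)) + (∑ i, d (q, i)) - d (q, p))
      = (2 * (K : ℝ) - 3) * S := by
    have inner : ∀ p : Fin K, ∑ q ∈ Finset.univ.filter (· ≠ p),
        ((∑ j, d (j, p)) + (∑ i, d (q, i)) - d (q, p))
        = ((K : ℝ) - 1) * (∑ j, d (j, p)) + (S - ∑ i, d (p, i))
          - ((∑ q, d (q, p)) - d (p, p)) := by
      intro p
      rw [Finset.sum_sub_distrib, Finset.sum_add_distrib]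
      congr 1
      · congr 1
        · rw [Finset.sum_const, nsmul_eq_mul, hcard p]
        · rw [hfilt p, Finset.sum_erase_eq_sub (Finset.mem_univ p), hS]
      · rw [hfilt p, Finset.sum_erase_eq_sub (Finset.mem_univ p)]
    rw [Finset.sum_congr rfl fun p _ => inner p]
    simp only [hdiag, sub_zero]
    rw [Finset.sum_sub_distrib, Finset.sum_add_distrib, Finset.sum_sub_distrib,
      ← Finset.mul_sum, hcolS, ← hS, Finset.sum_const, Finset.card_univ,
      Fintype.card_fin, nsmul_eq_mul]
    ring
  rw [hLHS] at hsum
  rw [hgoalS]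
  have hKpos : (0 : ℝ) < 2 * (K : ℝ) - 3 := by
    have : (2 : ℝ) ≤ (K : ℝ) := by exact_mod_cast hK
    linarith
  rw [le_div_iff₀ hKpos]
  linarith [hsum]
end
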